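/- The function J(u,v) = uv + α(1/u + 1/v) + β/(uv) is a first integral of the map f_{n+1} = (α + β/f_n)/(f_{n-1} f_n); that is, if w = (α + β/v)/(uv) with u, v, w nonzero, then J(u,v) = J(v,w). -/

import Mathlib

/-- `J(u,v) = uv + α(1/u + 1/v) + β/(uv)` is a first integral of the map
`f_{n+1} = (α + β/f_n)/(f_{n-1} f_n)`. -/
theorem first_integral_of_map (α β : ℂ) (u v w : ℂ) (hu : u ≠ 0) (hv : v ≠ 0)
    (hw : w ≠ 0) (hmap : w = (α + β / v) / (u * v))
    (J : ℂ → ℂ → ℂ) (hJ : ∀ x y, J x y = x * y + α * (1 / x + 1 / y) + β / (x * y)) :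
    J u v = J v w := by
  have key : w * u * v ^ 2 = α * v + β := by
    field_simp at hmap
    linear_combination hmap
  rw [hJ, hJ]
  field_simp
  linear_combination (u - w) * key
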